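/- Let k be any field of characteristic ≠ 2, and let j ≥ 1 be any positive integer. If m_{1,j}(k) < ∞, then m_{1,j}(k) ≥ m_{1,1}(k) + 2j − 2. -/

import Mathlib

/-!  Diagonal quadratic forms over a field of characteristic ≠ 2.
In characteristic ≠ 2 every regular quadratic form is isometric to a diagonal form
`⟨d 1, …, d n⟩`, so we model (regular) quadratic forms by their diagonal
coefficient functions. -/

/-- The diagonal quadratic form `⟨d i⟩_{i : ι}` over `k`. -/
noncomputable def diagQF (k : Type) [Field k] {ι : Type} [Fintype ι] (d : ι → k) :
    QuadraticForm k (ι → k) :=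
  QuadraticMap.weightedSumSquares k d

/-- Isometry of (diagonal) quadratic forms. -/
def FormIsom (k : Type) [Field k] {ι κ : Type} [Fintype ι] [Fintype κ]
    (d : ι → k) (e : κ → k) : Prop :=
  QuadraticMap.Equivalent (diagQF k d) (diagQF k e)

/-- The orthogonal sum of `m` copies of the hyperbolic plane `⟨1, -1⟩`. -/
def hypForm (k : Type) [Field k] (m : ℕ) : Fin (2 * m) → k :=
  fun j => if j.val % 2 = 0 then 1 else -1

/-- The Witt index of a (diagonal) form: the largest `m` such that the form is isometric
to `m·ℍ ⟂ (rest)` for some diagonal form `rest`. -/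
noncomputable def wittIndex (k : Type) [Field k] {ι : Type} [Fintype ι] (d : ι → k) : ℕ :=
  sSup {m : ℕ | ∃ (s : ℕ) (e : Fin s → k), FormIsom k d (Sum.elim (hypForm k m) e)}
/-- The u-invariant of a field: the supremum of the dimensions of anisotropic regular
quadratic forms over `k` (`⊤` if unbounded). -/
noncomputable def uInv (k : Type) [Field k] : ℕ∞ :=
  sSup {N : ℕ∞ | ∃ n : ℕ, N = n ∧
    ∃ d : Fin n → k, (∀ t, d t ≠ 0) ∧ (diagQF k d).Anisotropic}

/-- The refined m-invariant `m_{i,j}(k)`: the least dimension (`⊤` if there is none) of a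
regular quadratic form `q` of dimension ≥ 1 over `k` with `i_W(q) < j` such that
`i_W(q ⟂ σ) ≥ j` for every `i`-dimensional regular form `σ` over `k`. -/
noncomputable def mInv (k : Type) [Field k] (i j : ℕ) : ℕ∞ :=
  sInf {N : ℕ∞ | ∃ n : ℕ, N = n ∧ 1 ≤ n ∧
    ∃ d : Fin n → k, (∀ t, d t ≠ 0) ∧ wittIndex k d < j ∧
      ∀ σ : Fin i → k, (∀ t, σ t ≠ 0) → j ≤ wittIndex k (Sum.elim d σ)}



/-! ### Auxiliary lemmas -/

open QuadraticMap Finset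

variable {k : Type} [Field k]

theorem diagQF_apply {ι : Type} [Fintype ι] (d : ι → k) (x : ι → k) :
    diagQF k d x = ∑ i, d i * (x i * x i) := by
  simp [diagQF, weightedSumSquares_apply, smul_eq_mul]

/-- reindexing -/
theorem diag_reindex {ι κ : Type} [Fintype ι] [Fintype κ] (e : κ ≃ ι) (d : ι → k) :
    (diagQF k (d ∘ e)).Equivalent (diagQF k d) := by
  refine QuadraticMap.Equivalent.symm ⟨⟨LinearEquiv.funCongrLeft k k e, fun x => ?_⟩⟩
  simp only [diagQF_apply, LinearEquiv.toFun_eq_coe, AddHom.toFun_eq_coe,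
    LinearMap.coe_toAddHom, LinearEquiv.coe_coe, LinearEquiv.funCongrLeft_apply,
    LinearMap.funLeft_apply, Function.comp_apply]
  exact Equiv.sum_comp e (fun i => d i * (x i * x i))

theorem diag_congr {ι : Type} [Fintype ι] {d e : ι → k} (h : ∀ i, d i = e i) :
    (diagQF k d).Equivalent (diagQF k e) := by
  have : d = e := funext h
  subst this; exact QuadraticMap.Equivalent.refl _

/-- bridge to prod -/
noncomputable def diagSumProd {ι κ : Type} [Fintype ι] [Fintype κ] (d : ι → k) (e : κ → k) :
    (diagQF k (Sum.elim d e)).IsometryEquiv ((diagQF k d).prod (diagQF k e)) := by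
  refine ⟨LinearEquiv.sumArrowLequivProdArrow ι κ k k, fun x => ?_⟩
  simp only [LinearEquiv.toFun_eq_coe, AddHom.toFun_eq_coe, LinearMap.coe_toAddHom,
    LinearEquiv.coe_coe, QuadraticMap.prod_apply, diagQF_apply]
  rw [Fintype.sum_sum_type]
  simp [LinearEquiv.sumArrowLequivProdArrow]

theorem diag_sum_congr {ι κ ι' κ' : Type} [Fintype ι] [Fintype κ] [Fintype ι'] [Fintype κ']
    {d : ι → k} {e : κ → k} {d' : ι' → k} {e' : κ' → k}
    (h1 : (diagQF k d).Equivalent (diagQF k d')) (h2 : (diagQF k e).Equivalent (diagQF k e')) :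
    (diagQF k (Sum.elim d e)).Equivalent (diagQF k (Sum.elim d' e')) :=
  Equivalent.trans ⟨diagSumProd d e⟩
    (Equivalent.trans (h1.prod h2) ⟨(diagSumProd d' e').symm⟩)

theorem diag_sum_comm {ι κ : Type} [Fintype ι] [Fintype κ] (d : ι → k) (e : κ → k) :
    (diagQF k (Sum.elim d e)).Equivalent (diagQF k (Sum.elim e d)) := by
  have h1 : (diagQF k (Sum.elim d e ∘ Equiv.sumComm κ ι)).Equivalent
      (diagQF k (Sum.elim d e)) := diag_reindex _ _
  have h2 : (diagQF k (Sum.elim d e ∘ Equiv.sumComm κ ι)).Equivalent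
      (diagQF k (Sum.elim e d)) := diag_congr (by rintro (i|i) <;> rfl)
  exact Equivalent.trans (Equivalent.symm h1) h2

theorem diag_sum_assoc {ι κ μ : Type} [Fintype ι] [Fintype κ] [Fintype μ]
    (d : ι → k) (e : κ → k) (f : μ → k) :
    (diagQF k (Sum.elim (Sum.elim d e) f)).Equivalent
      (diagQF k (Sum.elim d (Sum.elim e f))) := by
  have h1 : (diagQF k (Sum.elim (Sum.elim d e) f ∘ (Equiv.sumAssoc ι κ μ).symm)).Equivalent
      (diagQF k (Sum.elim (Sum.elim d e) f)) := diag_reindex _ _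
  have h2 : (diagQF k (Sum.elim (Sum.elim d e) f ∘ (Equiv.sumAssoc ι κ μ).symm)).Equivalent
      (diagQF k (Sum.elim d (Sum.elim e f))) := diag_congr (by rintro (i|(i|i)) <;> rfl)
  exact Equivalent.trans (Equivalent.symm h1) h2

theorem diag_empty_sum {ι κ : Type} [Fintype ι] [Fintype κ] [IsEmpty ι]
    (d : ι → k) (e : κ → k) :
    (diagQF k (Sum.elim d e)).Equivalent (diagQF k e) := by
  have h1 : (diagQF k (Sum.elim d e ∘ (Equiv.emptySum ι κ).symm)).Equivalent
      (diagQF k (Sum.elim d e)) := diag_reindex _ _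
  have h2 : (diagQF k (Sum.elim d e ∘ (Equiv.emptySum ι κ).symm)).Equivalent
      (diagQF k e) := diag_congr (fun i => rfl)
  exact Equivalent.trans (Equivalent.symm h2) h1 |>.symm


open QuadraticMap

variable {k : Type} [Field k] {V : Type} [AddCommGroup V] [Module k V]

theorem qf_map_add (Q : QuadraticForm k V) (x y : V) :
    Q (x + y) = Q x + Q y + polar (⇑Q) x y := QuadraticMap.map_add ⇑Q x y

theorem qf_polar_self (Q : QuadraticForm k V) (x : V) :
    polar (⇑Q) x x = 2 * Q x := by
  rw [polar_self, two_nsmul, two_mul]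

theorem reflAux_lin (Q : QuadraticForm k V) (w : V) :
    IsLinearMap k (fun x => x - (polar Q w x / Q w) • w) := by
  constructor
  · intro x y
    rw [polar_add_right, add_div, add_smul]
    abel
  · intro c x
    rw [polar_smul_right, smul_eq_mul, mul_div_assoc, mul_smul, smul_sub]

theorem reflAux_inv (Q : QuadraticForm k V) (w : V) (hw : Q w ≠ 0) :
    Function.Involutive (fun x => x - (polar Q w x / Q w) • w) := by
  intro x
  simp only [polar_sub_right, polar_smul_right, smul_eq_mul, qf_polar_self]
  have h1 : polar (⇑Q) w x - polar (⇑Q) w x / Q w * (2 * Q w) = -polar (⇑Q) w x := by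
    field_simp; ring
  rw [h1, neg_div, neg_smul, sub_neg_eq_add]
  abel

theorem reflAux_map (Q : QuadraticForm k V) (w : V) (hw : Q w ≠ 0) (x : V) :
    Q (x - (polar Q w x / Q w) • w) = Q x := by
  rw [sub_eq_add_neg, ← neg_smul, qf_map_add, QuadraticMap.map_smul, polar_smul_right,
    smul_eq_mul, smul_eq_mul, polar_comm]
  field_simp
  ring

/-- The reflection in `w`, as an isometry of `Q`. -/
noncomputable def reflIso (Q : QuadraticForm k V) (w : V) (hw : Q w ≠ 0) :
    Q.IsometryEquiv Q :=
  ⟨LinearEquiv.ofInvolutive ((reflAux_lin Q w).mk' _) (reflAux_inv Q w hw), reflAux_map Q w hw⟩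

theorem reflIso_apply (Q : QuadraticForm k V) (w : V) (hw : Q w ≠ 0) (x : V) :
    reflIso Q w hw x = x - (polar Q w x / Q w) • w := rfl

/-- Witt extension step. -/
theorem exists_isometryEquiv_map_eq (h2 : (2 : k) ≠ 0) (Q : QuadraticForm k V) (u v : V)
    (huv : Q u = Q v) (h0 : Q u ≠ 0) : ∃ g : Q.IsometryEquiv Q, g u = v := by
  have e1 : Q (u - v) = Q u + Q v - polar (⇑Q) u v := by
    rw [sub_eq_add_neg, qf_map_add, QuadraticMap.map_neg, polar_neg_right]; ring
  have e2 : Q (u + v) = Q u + Q v + polar (⇑Q) u v := qf_map_add Q u v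
  by_cases hm : Q (u - v) ≠ 0
  · refine ⟨reflIso Q (u - v) hm, ?_⟩
    have hp : polar (⇑Q) (u - v) u = Q (u - v) := by
      rw [polar_sub_left, qf_polar_self, e1, polar_comm, ← huv]; ring
    rw [reflIso_apply, hp, div_self hm, one_smul, sub_sub_cancel]
  · push_neg at hm
    have hpl : Q (u + v) ≠ 0 := by
      intro h
      apply h0
      have hz : 2 * (2 * Q u) = 0 := by
        rw [show (2:k) * (2 * Q u) = Q (u - v) + Q (u + v) by rw [e1, e2, ← huv]; ring, hm, h,
          add_zero]
      rcases mul_eq_zero.mp hz with h' | h'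
      · exact absurd h' h2
      rcases mul_eq_zero.mp h' with h' | h'
      · exact absurd h' h2
      · exact h'
    have hv0 : Q v ≠ 0 := huv ▸ h0
    refine ⟨(reflIso Q (u + v) hpl).trans (reflIso Q v hv0), ?_⟩
    have hp : polar (⇑Q) (u + v) u = Q (u + v) := by
      rw [polar_add_left, qf_polar_self, e2, polar_comm, ← huv]; ring
    have step1 : reflIso Q (u + v) hpl u = -v := by
      rw [reflIso_apply, hp, div_self hpl, one_smul]
      abel
    have step2 : reflIso Q v hv0 (-v) = v := by
      rw [reflIso_apply, polar_neg_right, qf_polar_self, neg_div, neg_smul, sub_neg_eq_add]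
      rw [show 2 * Q v / Q v = 2 by field_simp, two_smul]
      abel
    show reflIso Q v hv0 (reflIso Q (u + v) hpl u) = v
    rw [step1, step2]


section cancel

variable {M₁ M₂ : Type} [AddCommGroup M₁] [Module k M₁] [AddCommGroup M₂] [Module k M₂]

theorem isometry_polar {Q₁ : QuadraticForm k M₁} {Q₂ : QuadraticForm k M₂}
    (f : Q₁.IsometryEquiv Q₂) (x y : M₁) :
    polar (⇑Q₂) (f x) (f y) = polar (⇑Q₁) x y := by
  simp only [polar, ← map_add, f.map_app]

theorem iso_symm_apply_apply {Q₁ : QuadraticForm k M₁} {Q₂ : QuadraticForm k M₂}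
    (f : Q₁.IsometryEquiv Q₂) (x : M₁) : f.symm (f x) = x :=
  f.toLinearEquiv.symm_apply_apply x

theorem iso_apply_symm_apply {Q₁ : QuadraticForm k M₁} {Q₂ : QuadraticForm k M₂}
    (f : Q₁.IsometryEquiv Q₂) (y : M₂) : f (f.symm y) = y :=
  f.toLinearEquiv.apply_symm_apply y

/-- notation for the 1-dim form ⟨a⟩ -/
noncomputable abbrev oneQF (a : k) : QuadraticForm k (Fin 1 → k) :=
  diagQF k (fun _ : Fin 1 => a)

theorem oneQF_apply (a : k) (x : Fin 1 → k) : oneQF a x = a * (x 0 * x 0) := by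
  rw [diagQF_apply, Fin.sum_univ_one]

private def delta1 : Fin 1 → k := fun _ => 1

theorem cancel_key (h2 : (2 : k) ≠ 0) {a : k} (ha : a ≠ 0)
    {Q₁ : QuadraticForm k M₁} {Q₂ : QuadraticForm k M₂}
    (F : ((oneQF a).prod Q₁).IsometryEquiv ((oneQF a).prod Q₂))
    (hF : F ((delta1 : Fin 1 → k), (0 : M₁)) = ((delta1 : Fin 1 → k), (0 : M₂)))
    (m : M₁) : (F ((0 : Fin 1 → k), m)).1 = 0 := by
  have hpol1 : polar (⇑((oneQF a).prod Q₁)) ((delta1 : Fin 1 → k), (0 : M₁)) (0, m) = 0 := by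
    simp only [polar, Prod.mk_add_mk, add_zero, zero_add, QuadraticMap.prod_apply,
      QuadraticMap.map_zero]
    ring
  have hpol2 : polar (⇑((oneQF a).prod Q₂)) ((delta1 : Fin 1 → k), (0 : M₂))
      (F (0, m)) = 0 := by
    rw [← hF, isometry_polar F, hpol1]
  set t := (F ((0 : Fin 1 → k), m)).1 with ht
  have hcomp : polar (⇑((oneQF a).prod Q₂)) ((delta1 : Fin 1 → k), (0 : M₂)) (F (0, m))
      = 2 * a * t 0 := by
    rw [polar]
    have : ((delta1 : Fin 1 → k), (0 : M₂)) + F (0, m) = (delta1 + t, (F (0, m)).2) :=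
      Prod.ext rfl (zero_add _)
    rw [this]
    simp only [QuadraticMap.prod_apply, oneQF_apply, Pi.add_apply, QuadraticMap.map_zero]
    have hδ : (delta1 : Fin 1 → k) 0 = 1 := rfl
    rw [hδ]
    ring
  rw [hcomp] at hpol2
  have ht0 : t 0 = 0 := by
    rcases mul_eq_zero.mp hpol2 with h | h
    · rcases mul_eq_zero.mp h with h | h
      · exact absurd h h2
      · exact absurd h ha
    · exact h
  funext i
  rw [Subsingleton.elim i 0, ht0]
  rfl

theorem prod_cancel (h2 : (2 : k) ≠ 0) {a : k} (ha : a ≠ 0)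
    (Q₁ : QuadraticForm k M₁) (Q₂ : QuadraticForm k M₂)
    (h : ((oneQF a).prod Q₁).Equivalent ((oneQF a).prod Q₂)) : Q₁.Equivalent Q₂ := by
  obtain ⟨f⟩ := h
  -- the distinguished vectors
  set u₁ : (Fin 1 → k) × M₁ := ((delta1 : Fin 1 → k), 0) with hu₁
  set u₂ : (Fin 1 → k) × M₂ := ((delta1 : Fin 1 → k), 0) with hu₂
  have hQu₁ : ((oneQF a).prod Q₁) u₁ = a := by
    simp only [hu₁, QuadraticMap.prod_apply, QuadraticMap.map_zero, oneQF_apply, add_zero]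
    have hδ : (delta1 : Fin 1 → k) 0 = 1 := rfl
    rw [hδ]; ring
  have hQv : ((oneQF a).prod Q₁) (f.symm u₂) = a := by
    rw [f.symm.map_app]
    simp only [hu₂, QuadraticMap.prod_apply, QuadraticMap.map_zero, oneQF_apply, add_zero]
    have hδ : (delta1 : Fin 1 → k) 0 = 1 := rfl
    rw [hδ]; ring
  obtain ⟨g, hg⟩ := exists_isometryEquiv_map_eq h2 _ u₁ (f.symm u₂)
    (by rw [hQu₁, hQv]) (by rw [hQu₁]; exact ha)
  set E := g.trans f with hE
  have hEu : E u₁ = u₂ := by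
    show f (g u₁) = u₂
    rw [hg, iso_apply_symm_apply]
  have key1 : ∀ m : M₁, (E ((0 : Fin 1 → k), m)).1 = 0 := cancel_key h2 ha E hEu
  have hEsymm_u : E.symm u₂ = u₁ := by rw [← hEu, iso_symm_apply_apply]
  have key2 : ∀ m : M₂, (E.symm ((0 : Fin 1 → k), m)).1 = 0 := cancel_key h2 ha E.symm hEsymm_u
  -- assemble the equivalence
  have hE0 : ∀ m : M₁, E ((0 : Fin 1 → k), m) = (0, (E ((0 : Fin 1 → k), m)).2) :=
    fun m => Prod.ext (key1 m) rfl
  have hE0' : ∀ m : M₂, E.symm ((0 : Fin 1 → k), m) = (0, (E.symm ((0 : Fin 1 → k), m)).2) :=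
    fun m => Prod.ext (key2 m) rfl
  refine ⟨⟨LinearEquiv.ofLinear
    ((LinearMap.snd k (Fin 1 → k) M₂) ∘ₗ (E.toLinearEquiv : _ →ₗ[k] _)
      ∘ₗ (LinearMap.inr k (Fin 1 → k) M₁))
    ((LinearMap.snd k (Fin 1 → k) M₁) ∘ₗ (E.toLinearEquiv.symm : _ →ₗ[k] _)
      ∘ₗ (LinearMap.inr k (Fin 1 → k) M₂)) ?_ ?_, ?_⟩⟩
  · ext m
    simp only [LinearMap.coe_comp, Function.comp_apply, LinearMap.coe_inr, LinearMap.snd_apply,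
      LinearMap.id_coe, id_eq, LinearEquiv.coe_coe]
    have : ((0 : Fin 1 → k), (E.toLinearEquiv.symm (0, m)).2) = E.toLinearEquiv.symm (0, m) :=
      (hE0' m).symm
    rw [this, E.toLinearEquiv.apply_symm_apply]
  · ext m
    simp only [LinearMap.coe_comp, Function.comp_apply, LinearMap.coe_inr, LinearMap.snd_apply,
      LinearMap.id_coe, id_eq, LinearEquiv.coe_coe]
    have : ((0 : Fin 1 → k), (E.toLinearEquiv (0, m)).2) = E.toLinearEquiv (0, m) :=
      (hE0 m).symm
    rw [this, E.toLinearEquiv.symm_apply_apply]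
  · intro m
    show Q₂ ((E.toLinearEquiv ((0 : Fin 1 → k), m)).2) = Q₁ m
    have h1 : Q₂ ((E.toLinearEquiv (0, m)).2) = ((oneQF a).prod Q₂) (E ((0 : Fin 1 → k), m)) := by
      rw [hE0 m]
      simp only [QuadraticMap.prod_apply, QuadraticMap.map_zero, zero_add]
      rfl
    rw [h1, E.map_app]
    simp only [QuadraticMap.prod_apply, QuadraticMap.map_zero, zero_add]

end cancel


section chunk4

open QuadraticMap

variable {k : Type} [Field k]

/-- ⟨a,-a⟩ as a `Fin 2`-indexed diagonal form. -/
def pmF (a : k) : Fin 2 → k := fun i => if (i : ℕ) = 0 then a else -a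

theorem hyp_one_eq_pmF : hypForm k 1 = pmF (1 : k) := by
  funext i
  fin_cases i <;> rfl

/-- The explicit isometry `⟨1,-1⟩ ≃ ⟨a,-a⟩`. -/
theorem pmF_equiv (h2 : (2 : k) ≠ 0) {a : k} (ha : a ≠ 0) :
    (diagQF k (pmF (1:k))).Equivalent (diagQF k (pmF a)) := by
  have h2a : (2 : k) * a ≠ 0 := mul_ne_zero h2 ha
  refine ⟨⟨⟨⟨⟨fun x => fun i => if (i : ℕ) = 0 then (x 0 + x 1)/2 + (x 0 - x 1)/(2*a)
      else (x 0 + x 1)/2 - (x 0 - x 1)/(2*a), ?_⟩, ?_⟩,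
    fun y => fun i => if (i : ℕ) = 0 then ((y 0 + y 1) + a*(y 0 - y 1))/2
      else ((y 0 + y 1) - a*(y 0 - y 1))/2, ?_, ?_⟩, ?_⟩⟩
  · intro x y
    funext i
    simp only [Pi.add_apply]
    split_ifs <;> field_simp <;> ring
  · intro c x
    funext i
    dsimp only
    simp only [Pi.smul_apply, smul_eq_mul, RingHom.id_apply]
    split_ifs <;> field_simp <;> ring
  · intro x
    funext i
    dsimp only
    by_cases hi : (i : ℕ) = 0
    · have hi0 : i = 0 := Fin.ext (by simpa using hi)
      subst hi0
      simp only [show ((0 : Fin 2) : ℕ) = 0 from rfl, show ((1 : Fin 2) : ℕ) = 1 from rfl,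
        one_ne_zero, reduceIte]
      field_simp
      ring
    · have hi1 : i = 1 := Fin.ext (by have := i.isLt; omega)
      subst hi1
      simp only [show ((0 : Fin 2) : ℕ) = 0 from rfl, show ((1 : Fin 2) : ℕ) = 1 from rfl,
        one_ne_zero, reduceIte]
      field_simp
      ring
  · intro y
    funext i
    dsimp only
    by_cases hi : (i : ℕ) = 0
    · have hi0 : i = 0 := Fin.ext (by simpa using hi)
      subst hi0
      simp only [show ((0 : Fin 2) : ℕ) = 0 from rfl, show ((1 : Fin 2) : ℕ) = 1 from rfl,
        one_ne_zero, reduceIte]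
      field_simp
      ring
    · have hi1 : i = 1 := Fin.ext (by have := i.isLt; omega)
      subst hi1
      simp only [show ((0 : Fin 2) : ℕ) = 0 from rfl, show ((1 : Fin 2) : ℕ) = 1 from rfl,
        one_ne_zero, reduceIte]
      field_simp
      ring
  · intro x
    dsimp only
    simp only [diagQF_apply, Fin.sum_univ_two, pmF]
    simp only [show ((0 : Fin 2) : ℕ) = 0 from rfl, show ((1 : Fin 2) : ℕ) = 1 from rfl,
      one_ne_zero, reduceIte]
    field_simp
    ring

end chunk4


section chunk5

open QuadraticMap

variable {k : Type} [Field k]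

/-- The 1-dimensional diagonal form ⟨a⟩. -/
abbrev oneF (a : k) : Fin 1 → k := fun _ => a

theorem pm_split (a : k) :
    (diagQF k (pmF a)).Equivalent (diagQF k (Sum.elim (oneF a) (oneF (-a)))) := by
  have h1 := diag_reindex (finSumFinEquiv.trans (finCongr (by norm_num : 1 + 1 = 2))) (pmF a)
  refine Equivalent.trans (Equivalent.symm h1) (diag_congr ?_)
  rintro (i | i)
  · have hv : (((finSumFinEquiv.trans (finCongr (by norm_num : 1 + 1 = 2)))
        (Sum.inl i)) : ℕ) = 0 := by
      have h0 : (i : ℕ) = 0 := by have := i.isLt; omega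
      simp only [Equiv.trans_apply, finCongr_apply, Fin.coe_cast, finSumFinEquiv_apply_left,
        Fin.coe_castAdd, h0]
    simp only [Function.comp_apply, Sum.elim_inl, pmF, oneF, if_pos hv]
  · have hv : (((finSumFinEquiv.trans (finCongr (by norm_num : 1 + 1 = 2)))
        (Sum.inr i)) : ℕ) = 1 := by
      have h0 : (i : ℕ) = 0 := by have := i.isLt; omega
      simp only [Equiv.trans_apply, finCongr_apply, Fin.coe_cast, finSumFinEquiv_apply_right,
        Fin.coe_natAdd, h0]
    have hne : ¬ ((((finSumFinEquiv.trans (finCongr (by norm_num : 1 + 1 = 2)))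
        (Sum.inr i)) : ℕ) = 0) := by rw [hv]; omega
    simp only [Function.comp_apply, Sum.elim_inr, pmF, oneF, if_neg hne]

theorem hyp1_split (h2 : (2 : k) ≠ 0) {a : k} (ha : a ≠ 0) :
    (diagQF k (hypForm k 1)).Equivalent (diagQF k (Sum.elim (oneF a) (oneF (-a)))) := by
  have h0 : (diagQF k (hypForm k 1)).Equivalent (diagQF k (pmF (1:k))) := by
    rw [hyp_one_eq_pmF]
  exact h0.trans ((pmF_equiv h2 ha).trans (pm_split a))

theorem diag_hyp_add (a b : ℕ) :
    (diagQF k (hypForm k (a + b))).Equivalent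
      (diagQF k (Sum.elim (hypForm k a) (hypForm k b))) := by
  have h1 := diag_reindex
    (finSumFinEquiv.trans (finCongr (by ring : 2 * a + 2 * b = 2 * (a + b)))) (hypForm k (a + b))
  refine Equivalent.trans (Equivalent.symm h1) (diag_congr ?_)
  rintro (i | i)
  · have hv : (((finSumFinEquiv.trans (finCongr (by ring : 2 * a + 2 * b = 2 * (a + b))))
        (Sum.inl i)) : ℕ) = (i : ℕ) := by simp
    simp only [Function.comp_apply, Sum.elim_inl, hypForm, hv]
  · have hv : (((finSumFinEquiv.trans (finCongr (by ring : 2 * a + 2 * b = 2 * (a + b))))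
        (Sum.inr i)) : ℕ) = 2 * a + (i : ℕ) := by simp
    have hmod : (2 * a + (i : ℕ)) % 2 = (i : ℕ) % 2 := by omega
    simp only [Function.comp_apply, Sum.elim_inr, hypForm, hv, hmod]

/-- Expansion `ℍ^{m+1} ⟂ d ≃ ⟨a⟩ ⟂ ⟨-a⟩ ⟂ ℍ^m ⟂ d`. -/
theorem hyp_succ_expand (h2 : (2 : k) ≠ 0) {a : k} (ha : a ≠ 0) (m : ℕ) {ι : Type} [Fintype ι]
    (d : ι → k) :
    (diagQF k (Sum.elim (hypForm k (m + 1)) d)).Equivalent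
      (diagQF k (Sum.elim (oneF a) (Sum.elim (oneF (-a))
        (Sum.elim (hypForm k m) d)))) := by
  have s1 : (diagQF k (Sum.elim (hypForm k (m + 1)) d)).Equivalent
      (diagQF k (Sum.elim (Sum.elim (hypForm k m) (hypForm k 1)) d)) :=
    diag_sum_congr (diag_hyp_add m 1) (Equivalent.refl _)
  have s2 : (diagQF k (Sum.elim (Sum.elim (hypForm k m) (hypForm k 1)) d)).Equivalent
      (diagQF k (Sum.elim (hypForm k m) (Sum.elim (hypForm k 1) d))) := diag_sum_assoc _ _ _
  have s3 : (diagQF k (Sum.elim (hypForm k m) (Sum.elim (hypForm k 1) d))).Equivalent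
      (diagQF k (Sum.elim (Sum.elim (hypForm k 1) d) (hypForm k m))) := diag_sum_comm _ _
  have s4 : (diagQF k (Sum.elim (Sum.elim (hypForm k 1) d) (hypForm k m))).Equivalent
      (diagQF k (Sum.elim (hypForm k 1) (Sum.elim d (hypForm k m)))) := diag_sum_assoc _ _ _
  have s5 : (diagQF k (Sum.elim (hypForm k 1) (Sum.elim d (hypForm k m)))).Equivalent
      (diagQF k (Sum.elim (Sum.elim (oneF a) (oneF (-a))) (Sum.elim (hypForm k m) d))) :=
    diag_sum_congr (hyp1_split h2 ha) (diag_sum_comm _ _)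
  have s6 : (diagQF k (Sum.elim (Sum.elim (oneF a) (oneF (-a)))
      (Sum.elim (hypForm k m) d))).Equivalent
      (diagQF k (Sum.elim (oneF a) (Sum.elim (oneF (-a))
        (Sum.elim (hypForm k m) d)))) := diag_sum_assoc _ _ _
  exact ((((s1.trans s2).trans s3).trans s4).trans s5).trans s6

/-- cancel a common 1-dimensional diagonal summand -/
theorem diag_cancel_one (h2 : (2 : k) ≠ 0) {a : k} (ha : a ≠ 0) {ι κ : Type}
    [Fintype ι] [Fintype κ] {d : ι → k} {e : κ → k}
    (h : (diagQF k (Sum.elim (oneF a) d)).Equivalent (diagQF k (Sum.elim (oneF a) e))) :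
    (diagQF k d).Equivalent (diagQF k e) := by
  apply prod_cancel h2 ha
  exact Equivalent.trans ⟨(diagSumProd (oneF a) d).symm⟩
    (Equivalent.trans h ⟨diagSumProd (oneF a) e⟩)

/-- Witt cancellation of `m` hyperbolic planes. -/
theorem diag_cancel_hyp (h2 : (2 : k) ≠ 0) (m : ℕ) :
    ∀ {ι κ : Type} [Fintype ι] [Fintype κ] {d : ι → k} {e : κ → k},
      (diagQF k (Sum.elim (hypForm k m) d)).Equivalent
        (diagQF k (Sum.elim (hypForm k m) e)) →
      (diagQF k d).Equivalent (diagQF k e) := by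
  induction m with
  | zero =>
    intro ι κ _ _ d e h
    haveI : IsEmpty (Fin (2 * 0)) := ⟨fun i => absurd i.2 (by omega)⟩
    exact ((diag_empty_sum (hypForm k 0) d).symm.trans h).trans (diag_empty_sum (hypForm k 0) e)
  | succ m ih =>
    intro ι κ _ _ d e h
    have h' := ((hyp_succ_expand h2 (one_ne_zero : (1:k) ≠ 0) m d).symm.trans h).trans
      (hyp_succ_expand h2 (one_ne_zero : (1:k) ≠ 0) m e)
    have h'' := diag_cancel_one h2 (neg_ne_zero.mpr (one_ne_zero : (1:k) ≠ 0))
      (diag_cancel_one h2 (one_ne_zero : (1:k) ≠ 0) h')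
    exact ih h''

end chunk5


section chunk6

open QuadraticMap

variable {k : Type} [Field k]

theorem equiv_card_eq {ι κ : Type} [Fintype ι] [Fintype κ] {d : ι → k} {e : κ → k}
    (h : (diagQF k d).Equivalent (diagQF k e)) : Fintype.card ι = Fintype.card κ := by
  obtain ⟨f⟩ := h
  have h1 := f.toLinearEquiv.finrank_eq
  rwa [Module.finrank_fintype_fun_eq_card, Module.finrank_fintype_fun_eq_card] at h1

theorem mem_wittSet {ι κ : Type} [Fintype ι] [Fintype κ] {d : ι → k} {m : ℕ} {e : κ → k}
    (h : (diagQF k d).Equivalent (diagQF k (Sum.elim (hypForm k m) e))) :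
    m ∈ {m : ℕ | ∃ (s : ℕ) (e : Fin s → k), FormIsom k d (Sum.elim (hypForm k m) e)} := by
  refine ⟨Fintype.card κ, e ∘ (Fintype.equivFin κ).symm, ?_⟩
  exact h.trans (diag_sum_congr (Equivalent.refl _)
    (Equivalent.symm (diag_reindex (Fintype.equivFin κ).symm e)))

theorem wittSet_bddAbove {ι : Type} [Fintype ι] (d : ι → k) :
    BddAbove {m : ℕ | ∃ (s : ℕ) (e : Fin s → k), FormIsom k d (Sum.elim (hypForm k m) e)} := by
  refine ⟨Fintype.card ι, fun m hm => ?_⟩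
  obtain ⟨s, e, he⟩ := hm
  have hc := equiv_card_eq (he : (diagQF k d).Equivalent _)
  rw [Fintype.card_sum, Fintype.card_fin, Fintype.card_fin] at hc
  omega

theorem wittSet_zero_mem {ι : Type} [Fintype ι] (d : ι → k) :
    0 ∈ {m : ℕ | ∃ (s : ℕ) (e : Fin s → k), FormIsom k d (Sum.elim (hypForm k m) e)} := by
  haveI : IsEmpty (Fin (2 * 0)) := ⟨fun i => absurd i.2 (by omega)⟩
  exact mem_wittSet (Equivalent.symm (diag_empty_sum (hypForm k 0) d))

theorem le_wittIndex {ι κ : Type} [Fintype ι] [Fintype κ] {d : ι → k} {m : ℕ} {e : κ → k}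
    (h : (diagQF k d).Equivalent (diagQF k (Sum.elim (hypForm k m) e))) :
    m ≤ wittIndex k d :=
  le_csSup (wittSet_bddAbove d) (mem_wittSet h)

theorem wittIndex_mem {ι : Type} [Fintype ι] (d : ι → k) :
    ∃ (s : ℕ) (e : Fin s → k),
      (diagQF k d).Equivalent (diagQF k (Sum.elim (hypForm k (wittIndex k d)) e)) :=
  Nat.sSup_mem ⟨0, wittSet_zero_mem d⟩ (wittSet_bddAbove d)

theorem wittIndex_dim_bound {ι κ : Type} [Fintype ι] [Fintype κ] {d : ι → k} {m : ℕ} {e : κ → k}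
    (h : (diagQF k d).Equivalent (diagQF k (Sum.elim (hypForm k m) e))) :
    2 * m ≤ Fintype.card ι := by
  have hc := equiv_card_eq h
  rw [Fintype.card_sum, Fintype.card_fin] at hc
  omega

theorem polar_diag {ι : Type} [Fintype ι] (d : ι → k) (x y : ι → k) :
    polar (⇑(diagQF k d)) x y = ∑ i, d i * (2 * x i * y i) := by
  simp only [polar, diagQF_apply, Pi.add_apply]
  rw [← Finset.sum_sub_distrib, ← Finset.sum_sub_distrib]
  exact Finset.sum_congr rfl fun i _ => by ring

theorem nonzero_of_equiv {ι κ : Type} [Fintype ι] [Fintype κ] {d : ι → k} {e : κ → k}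
    (h2 : (2 : k) ≠ 0) (hd : ∀ t, d t ≠ 0)
    (h : (diagQF k d).Equivalent (diagQF k e)) : ∀ t, e t ≠ 0 := by
  classical
  obtain ⟨f⟩ := h
  intro t0 ht0
  set v := f.symm (Pi.single t0 1) with hv
  have hvne : v ≠ 0 := by
    intro h0
    have h1 : (Pi.single t0 1 : κ → k) = 0 := by
      have h3 := congrArg f h0
      rw [hv, iso_apply_symm_apply, map_zero] at h3
      exact h3
    have h4 := congrFun h1 t0
    rw [Pi.single_eq_same] at h4
    exact one_ne_zero h4
  obtain ⟨s, hs⟩ : ∃ s, v s ≠ 0 := by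
    by_contra hc
    push_neg at hc
    exact hvne (funext hc)
  have hp : polar (⇑(diagQF k d)) (Pi.single s 1) v = 0 := by
    have h1 : polar (⇑(diagQF k e)) (f (Pi.single s 1)) (f v) =
        polar (⇑(diagQF k d)) (Pi.single s 1) v := isometry_polar f _ _
    rw [← h1, hv, iso_apply_symm_apply, polar_diag, Finset.sum_eq_single t0]
    · rw [Pi.single_eq_same, ht0]; ring
    · intro b _ hb; rw [Pi.single_eq_of_ne hb]; ring
    · intro hb; exact absurd (Finset.mem_univ t0) hb
  rw [polar_diag, Finset.sum_eq_single s] at hp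
  · rw [Pi.single_eq_same] at hp
    rcases mul_eq_zero.mp hp with h' | h'
    · exact hd s h'
    rcases mul_eq_zero.mp h' with h'' | h''
    · rcases mul_eq_zero.mp h'' with h3 | h3
      · exact h2 h3
      · exact one_ne_zero h3
    · exact hs h''
  · intro b _ hb; rw [Pi.single_eq_of_ne hb]; ring
  · intro hb; exact absurd (Finset.mem_univ s) hb

/-- Key step: from `d ⟂ ⟨a⟩ ≃ (W+1)·ℍ ⟂ E` we may cancel `⟨a⟩` against one hyperbolic
plane written as `⟨a⟩ ⟂ ⟨-a⟩`, obtaining `d ≃ ⟨-a⟩ ⟂ W·ℍ ⟂ E`. -/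
theorem keyA (h2 : (2 : k) ≠ 0) {ι : Type} [Fintype ι] (d : ι → k) {a : k} (ha : a ≠ 0)
    (W : ℕ) {S : ℕ} (E : Fin S → k)
    (h : (diagQF k (Sum.elim d (oneF a))).Equivalent
      (diagQF k (Sum.elim (hypForm k (W + 1)) E))) :
    (diagQF k d).Equivalent (diagQF k (Sum.elim (oneF (-a)) (Sum.elim (hypForm k W) E))) := by
  have h3 : (diagQF k (Sum.elim (oneF a) d)).Equivalent
      (diagQF k (Sum.elim (oneF a) (Sum.elim (oneF (-a)) (Sum.elim (hypForm k W) E)))) :=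
    ((diag_sum_comm (oneF a) d).trans h).trans (hyp_succ_expand h2 ha W E)
  exact diag_cancel_one h2 ha h3

/-- pull a hyperbolic block to the front past a one-dimensional form -/
theorem keyB {ι : Type} [Fintype ι] (b : k) (W : ℕ) (E : ι → k) :
    (diagQF k (Sum.elim (oneF b) (Sum.elim (hypForm k W) E))).Equivalent
      (diagQF k (Sum.elim (hypForm k W) (Sum.elim E (oneF b)))) :=
  (diag_sum_comm (oneF b) (Sum.elim (hypForm k W) E)).trans
    (diag_sum_assoc (hypForm k W) E (oneF b))

end chunk6


open QuadraticMap in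
/-- **Lemma (decreasing `j` in `m_{1,j}`).**  Let `k` be a field of characteristic ≠ 2
and `j ≥ 1`.  If `m_{1,j}(k) < ∞`, then `m_{1,j}(k) ≥ m_{1,1}(k) + 2j - 2`. -/
theorem statement14 (k : Type) [Field k] (hchar : ringChar k ≠ 2)
    (j : ℕ) (hj : 1 ≤ j) (hfin : mInv k 1 j ≠ ⊤) :
    mInv k 1 1 + 2 * (j : ℕ∞) - 2 ≤ mInv k 1 j := by
  have h2 : (2 : k) ≠ 0 := by
    intro h
    haveI := ringChar.charP k
    have hd2 : ringChar k ∣ 2 :=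
      (CharP.cast_eq_zero_iff k (ringChar k) 2).mp (by exact_mod_cast h)
    rcases Nat.prime_two.eq_one_or_self_of_dvd _ hd2 with h1 | h1
    · have h0 : ((1 : ℕ) : k) = 0 := (CharP.cast_eq_zero_iff k (ringChar k) 1).mpr (by rw [h1])
      rw [Nat.cast_one] at h0
      exact one_ne_zero h0
    · exact hchar h1
  have hrepr : mInv k 1 j = sInf {N : ℕ∞ | ∃ n : ℕ, N = n ∧ 1 ≤ n ∧
      ∃ d : Fin n → k, (∀ t, d t ≠ 0) ∧ wittIndex k d < j ∧
        ∀ σ : Fin 1 → k, (∀ t, σ t ≠ 0) → j ≤ wittIndex k (Sum.elim d σ)} := rfl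
  rw [hrepr]
  refine le_sInf ?_
  rintro N ⟨n, rfl, hn1, d, hd0, hwlt, hall⟩
  -- Witt decomposition of d
  obtain ⟨s, r, hdec⟩ := wittIndex_mem d
  set w := wittIndex k d with hw
  have hcard : n = 2 * w + s := by
    have hc := equiv_card_eq hdec
    rw [Fintype.card_fin, Fintype.card_sum, Fintype.card_fin, Fintype.card_fin] at hc
    omega
  -- entries of r are nonzero
  have hrnz : ∀ t, r t ≠ 0 := by
    have hall0 := nonzero_of_equiv h2 hd0 hdec
    intro t
    exact hall0 (Sum.inr t)
  -- applying the hypothesis to σ = ⟨1⟩ shows w = j - 1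
  have hσ1 : ∀ t, oneF (1 : k) t ≠ 0 := fun _ => one_ne_zero
  have hj1 : j ≤ wittIndex k (Sum.elim d (oneF (1 : k))) := hall (oneF 1) hσ1
  obtain ⟨S1, E1, hdec1⟩ := wittIndex_mem (Sum.elim d (oneF (1 : k)))
  obtain ⟨W1', hW1⟩ : ∃ W1', wittIndex k (Sum.elim d (oneF (1 : k))) = W1' + 1 :=
    ⟨wittIndex k (Sum.elim d (oneF (1 : k))) - 1, by omega⟩
  rw [hW1] at hdec1
  have hA1 := keyA h2 d one_ne_zero W1' E1 hdec1
  have hwge : W1' ≤ w := le_wittIndex (hA1.trans (keyB (-1) W1' E1))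
  have hwj : w = j - 1 := by omega
  -- dimension bound for d ⟂ ⟨1⟩, giving s ≥ 1
  have hdim1 : 2 * (W1' + 1) ≤ n + 1 := by
    have hb := wittIndex_dim_bound hdec1
    rwa [Fintype.card_sum, Fintype.card_fin, Fintype.card_fin] at hb
  have hs1 : 1 ≤ s := by omega
  -- wittIndex r = 0
  have hrw : wittIndex k r < 1 := by
    obtain ⟨sr, er, hdecr⟩ := wittIndex_mem r
    by_contra hcon
    push_neg at hcon
    have hchain : (diagQF k d).Equivalent
        (diagQF k (Sum.elim (hypForm k (w + wittIndex k r)) er)) := by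
      refine hdec.trans ?_
      refine (diag_sum_congr (Equivalent.refl _) hdecr).trans ?_
      refine (Equivalent.symm
        (diag_sum_assoc (hypForm k w) (hypForm k (wittIndex k r)) er)).trans ?_
      exact diag_sum_congr (Equivalent.symm (diag_hyp_add w (wittIndex k r))) (Equivalent.refl _)
    have hle := le_wittIndex hchain
    omega
  -- for every nonzero σ, r ⟂ σ is isotropic
  have hrall : ∀ σ : Fin 1 → k, (∀ t, σ t ≠ 0) → 1 ≤ wittIndex k (Sum.elim r σ) := by
    intro σ hσ
    have ha : σ 0 ≠ 0 := hσ 0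
    have hσa : (diagQF k σ).Equivalent (diagQF k (oneF (σ 0))) :=
      diag_congr fun t => by rw [Subsingleton.elim t (0 : Fin 1)]
    have hjσ : j ≤ wittIndex k (Sum.elim d σ) := hall σ hσ
    obtain ⟨Sσ, Eσ, hdecσ⟩ := wittIndex_mem (Sum.elim d σ)
    obtain ⟨Wσ', hWσ⟩ : ∃ Wσ', wittIndex k (Sum.elim d σ) = Wσ' + 1 :=
      ⟨wittIndex k (Sum.elim d σ) - 1, by omega⟩
    rw [hWσ] at hdecσ
    have hdecσ' : (diagQF k (Sum.elim d (oneF (σ 0)))).Equivalent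
        (diagQF k (Sum.elim (hypForm k (Wσ' + 1)) Eσ)) :=
      (diag_sum_congr (Equivalent.refl _) (Equivalent.symm hσa)).trans hdecσ
    have hA := keyA h2 d ha Wσ' Eσ hdecσ'
    obtain ⟨c, hc⟩ : ∃ c, Wσ' = w + c := ⟨Wσ' - w, by omega⟩
    rw [hc] at hA
    have hA2 : (diagQF k d).Equivalent
        (diagQF k (Sum.elim (hypForm k w) (Sum.elim (Sum.elim (hypForm k c) Eσ)
          (oneF (-(σ 0)))))) := by
      refine hA.trans ?_
      refine (diag_sum_congr (Equivalent.refl _)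
        ((diag_sum_congr (diag_hyp_add w c) (Equivalent.refl _)).trans
          (diag_sum_assoc (hypForm k w) (hypForm k c) Eσ))).trans ?_
      exact keyB _ w _
    have hcanc : (diagQF k r).Equivalent
        (diagQF k (Sum.elim (Sum.elim (hypForm k c) Eσ) (oneF (-(σ 0))))) :=
      diag_cancel_hyp h2 w (hdec.symm.trans hA2)
    have hfinal : (diagQF k (Sum.elim r σ)).Equivalent
        (diagQF k (Sum.elim (hypForm k (1 + c)) Eσ)) := by
      refine (diag_sum_congr hcanc hσa).trans ?_
      refine (diag_sum_assoc (Sum.elim (hypForm k c) Eσ) (oneF (-(σ 0))) (oneF (σ 0))).trans ?_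
      refine (diag_sum_congr (Equivalent.refl _) ((diag_sum_comm _ _).trans
        (Equivalent.symm (hyp1_split h2 ha)))).trans ?_
      refine (diag_sum_comm _ _).trans ?_
      refine (Equivalent.symm (diag_sum_assoc (hypForm k 1) (hypForm k c) Eσ)).trans ?_
      exact diag_sum_congr (Equivalent.symm (diag_hyp_add 1 c)) (Equivalent.refl _)
    have hle := le_wittIndex hfinal
    omega
  -- r is a witness for mInv k 1 1
  have hmem : ((s : ℕ∞)) ∈ {N : ℕ∞ | ∃ n : ℕ, N = n ∧ 1 ≤ n ∧
      ∃ d : Fin n → k, (∀ t, d t ≠ 0) ∧ wittIndex k d < 1 ∧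
        ∀ σ : Fin 1 → k, (∀ t, σ t ≠ 0) → 1 ≤ wittIndex k (Sum.elim d σ)} :=
    ⟨s, rfl, hs1, r, hrnz, hrw, hrall⟩
  have hm1 : mInv k 1 1 ≤ (s : ℕ∞) := by
    have hrepr1 : mInv k 1 1 = sInf {N : ℕ∞ | ∃ n : ℕ, N = n ∧ 1 ≤ n ∧
        ∃ d : Fin n → k, (∀ t, d t ≠ 0) ∧ wittIndex k d < 1 ∧
          ∀ σ : Fin 1 → k, (∀ t, σ t ≠ 0) → 1 ≤ wittIndex k (Sum.elim d σ)} := rfl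
    rw [hrepr1]
    exact sInf_le hmem
  have harith : (s : ℕ∞) + 2 * (j : ℕ∞) - 2 = (n : ℕ∞) := by
    have hsum : (s : ℕ∞) + 2 * (j : ℕ∞) = ((s + 2 * j : ℕ) : ℕ∞) := by push_cast; ring
    rw [hsum, show (2 : ℕ∞) = ((2 : ℕ) : ℕ∞) by norm_cast, ← ENat.coe_sub]
    congr 1
    omega
  calc mInv k 1 1 + 2 * (j : ℕ∞) - 2 ≤ (s : ℕ∞) + 2 * (j : ℕ∞) - 2 :=
        tsub_le_tsub_right (add_le_add_left hm1 _) 2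
    _ = (n : ℕ∞) := harith
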